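/- Let N ≥ 1 and let k, l be integers with 0 ≤ l ≤ k ≤ N and k + l ≤ N. Then for every 2×2 complex matrix G: ⟨N,k| G^{⊗N} |N,l⟩ = √(binom(N,k)/binom(N,l)) · Σ_{m=0}^{l} binom(k,m)·binom(N−k, l−m)·(G_{11})^m·(G_{10})^{k−m}·(G_{01})^{l−m}·(G_{00})^{N−k−l+m}. -/

import Mathlib

open scoped BigOperators

/-- Kronecker (tensor) product of `N` matrices of size `d × d`, acting on `(ℂ^d)^{⊗N}`
realized as `(Fin N → Fin d) → ℂ`. -/
noncomputable def kron {d : ℕ} (N : ℕ) (M : Fin N → Matrix (Fin d) (Fin d) ℂ) :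
    Matrix (Fin N → Fin d) (Fin N → Fin d) ℂ :=
  Matrix.of fun b b' => ∏ i, M i (b i) (b' i)

/-- `N`-fold tensor (Kronecker) power of a matrix. -/
noncomputable def tensPow {d : ℕ} (N : ℕ) (M : Matrix (Fin d) (Fin d) ℂ) :
    Matrix (Fin N → Fin d) (Fin N → Fin d) ℂ :=
  kron N fun _ => M

/-- The Dicke state `|N,k⟩` on `N` qubits. -/
noncomputable def dicke (N k : ℕ) : (Fin N → Fin 2) → ℂ := fun b =>
  if (Finset.univ.filter fun i => b i = 1).card = k then
    ((Real.sqrt (N.choose k))⁻¹ : ℝ) else 0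

/-- The matrix element `⟨N,k| M |N,l⟩` for an operator `M` on `(ℂ²)^{⊗N}`. -/
noncomputable def matElem (N k l : ℕ) (M : Matrix (Fin N → Fin 2) (Fin N → Fin 2) ℂ) : ℂ :=
  ∑ b : Fin N → Fin 2, ∑ b' : Fin N → Fin 2,
    (starRingEnd ℂ) (dicke N k b) * M b b' * dicke N l b'

open Finset

lemma fin2_cases : ∀ x : Fin 2, x = 0 ∨ x = 1 := by decide
lemma fin2_not_one : ∀ x : Fin 2, (¬ x = 1) ↔ x = 0 := by decide

/-- indicator function of a finset -/
def indF {N : ℕ} (S : Finset (Fin N)) : Fin N → Fin 2 := fun i => if i ∈ S then 1 else 0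

lemma filter_indF {N : ℕ} (S : Finset (Fin N)) :
    Finset.univ.filter (fun i => indF S i = 1) = S := by
  ext i; by_cases h : i ∈ S <;> simp [indF, h]

lemma indF_filter {N : ℕ} (b : Fin N → Fin 2) :
    indF (Finset.univ.filter fun i => b i = 1) = b := by
  funext i
  rcases fin2_cases (b i) with h | h <;> simp [indF, h]

lemma card_wt (N k : ℕ) :
    (Finset.univ.filter fun b : Fin N → Fin 2 =>
      (Finset.univ.filter fun i => b i = 1).card = k).card = N.choose k := by
  have h := Finset.card_nbij' (s := Finset.univ.filter fun b : Fin N → Fin 2 =>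
      (Finset.univ.filter fun i => b i = 1).card = k)
      (t := Finset.powersetCard k (Finset.univ : Finset (Fin N)))
      (fun b => Finset.univ.filter fun i => b i = 1) (fun S => indF S)
      (by intro b hb
          simp only [Finset.mem_coe, Finset.mem_filter] at hb
          exact Finset.mem_powersetCard.mpr ⟨Finset.subset_univ _, hb.2⟩)
      (by intro S hS
          simp only [Finset.mem_coe, Finset.mem_filter, filter_indF]
          exact ⟨Finset.mem_univ _, (Finset.mem_powersetCard.mp (Finset.mem_coe.mp hS)).2⟩)
      (by intro b _; exact indF_filter b)
      (by intro S _; exact filter_indF S)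
  rw [h, Finset.card_powersetCard, Finset.card_univ, Fintype.card_fin]

lemma hfib {N : ℕ} (b b' : Fin N → Fin 2) (x y : Fin 2) :
    Finset.univ.filter (fun i => (b i, b' i) = (x, y)) =
      Finset.univ.filter (fun i => b i = x ∧ b' i = y) := by
  ext i; simp [Prod.ext_iff]

lemma prod_G (N : ℕ) (G : Matrix (Fin 2) (Fin 2) ℂ) (b b' : Fin N → Fin 2) :
    ∏ i, G (b i) (b' i) =
      G 1 1 ^ (Finset.univ.filter fun i => b i = 1 ∧ b' i = 1).card *
      G 1 0 ^ (Finset.univ.filter fun i => b i = 1 ∧ b' i = 0).card *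
      G 0 1 ^ (Finset.univ.filter fun i => b i = 0 ∧ b' i = 1).card *
      G 0 0 ^ (Finset.univ.filter fun i => b i = 0 ∧ b' i = 0).card := by
  classical
  have h := Finset.prod_fiberwise_of_maps_to (s := (Finset.univ : Finset (Fin N)))
      (t := (Finset.univ : Finset (Fin 2 × Fin 2))) (g := fun i => (b i, b' i))
      (fun i _ => Finset.mem_univ _) (fun i => G (b i) (b' i))
  rw [← h]
  have key : ∀ x y : Fin 2,
      (∏ i ∈ Finset.univ.filter (fun i => (b i, b' i) = (x, y)), G (b i) (b' i)) =
        G x y ^ (Finset.univ.filter fun i => b i = x ∧ b' i = y).card := by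
    intro x y
    rw [hfib]
    calc (∏ i ∈ Finset.univ.filter (fun i => b i = x ∧ b' i = y), G (b i) (b' i))
        = ∏ _i ∈ Finset.univ.filter (fun i => b i = x ∧ b' i = y), G x y :=
          Finset.prod_congr rfl (fun i hi => by
            simp only [Finset.mem_filter] at hi; rw [hi.2.1, hi.2.2])
      _ = G x y ^ (Finset.univ.filter fun i => b i = x ∧ b' i = y).card :=
          Finset.prod_const _
  rw [Fintype.prod_prod_type]
  rw [Fin.prod_univ_two, Fin.prod_univ_two, Fin.prod_univ_two]
  rw [key 0 0, key 0 1, key 1 0, key 1 1]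
  ring

lemma four_cards {N k l m : ℕ} (hklN : k + l ≤ N) (b b' : Fin N → Fin 2)
    (hb : (Finset.univ.filter fun i => b i = 1).card = k)
    (hb' : (Finset.univ.filter fun i => b' i = 1).card = l)
    (hm : (Finset.univ.filter fun i => b i = 1 ∧ b' i = 1).card = m) :
    (Finset.univ.filter fun i => b i = 1 ∧ b' i = 0).card = k - m ∧
    (Finset.univ.filter fun i => b i = 0 ∧ b' i = 1).card = l - m ∧
    (Finset.univ.filter fun i => b i = 0 ∧ b' i = 0).card = N - k - l + m := by
  classical
  have e1 : (Finset.univ.filter fun i => b i = 1 ∧ b' i = 1).card +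
      (Finset.univ.filter fun i => b i = 1 ∧ b' i = 0).card = k := by
    have := Finset.card_filter_add_card_filter_not
      (s := Finset.univ.filter fun i : Fin N => b i = 1) (p := fun i => b' i = 1)
    rw [Finset.filter_filter, Finset.filter_filter] at this
    simp only [fin2_not_one] at this
    rw [hb] at this
    exact this
  have e2 : (Finset.univ.filter fun i => b' i = 1 ∧ b i = 1).card +
      (Finset.univ.filter fun i => b' i = 1 ∧ b i = 0).card = l := by
    have := Finset.card_filter_add_card_filter_not
      (s := Finset.univ.filter fun i : Fin N => b' i = 1) (p := fun i => b i = 1)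
    rw [Finset.filter_filter, Finset.filter_filter] at this
    simp only [fin2_not_one] at this
    rw [hb'] at this
    exact this
  have ec1 : (Finset.univ.filter fun i => b' i = 1 ∧ b i = 1).card = m := by
    rw [← hm]; congr 1; ext i; simp [and_comm]
  have ec2 : (Finset.univ.filter fun i => b' i = 1 ∧ b i = 0).card =
      (Finset.univ.filter fun i => b i = 0 ∧ b' i = 1).card := by
    congr 1; ext i; simp [and_comm]
  have etot : N = (Finset.univ.filter fun i => b i = 0 ∧ b' i = 0).card +
      (Finset.univ.filter fun i => b i = 0 ∧ b' i = 1).card +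
      (Finset.univ.filter fun i => b i = 1 ∧ b' i = 0).card +
      (Finset.univ.filter fun i => b i = 1 ∧ b' i = 1).card := by
    have h := Finset.card_eq_sum_card_fiberwise (s := (Finset.univ : Finset (Fin N)))
        (t := (Finset.univ : Finset (Fin 2 × Fin 2))) (f := fun i => (b i, b' i))
        (fun i _ => Finset.mem_univ _)
    rw [Finset.card_univ, Fintype.card_fin] at h
    have h2 : (∑ p : Fin 2 × Fin 2,
        (Finset.univ.filter fun a : Fin N => (b a, b' a) = p).card) =
        (Finset.univ.filter fun i => b i = 0 ∧ b' i = 0).card +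
        (Finset.univ.filter fun i => b i = 0 ∧ b' i = 1).card +
        (Finset.univ.filter fun i => b i = 1 ∧ b' i = 0).card +
        (Finset.univ.filter fun i => b i = 1 ∧ b' i = 1).card := by
      rw [Fintype.sum_prod_type, Fin.sum_univ_two, Fin.sum_univ_two, Fin.sum_univ_two]
      rw [hfib, hfib, hfib, hfib]
      ring
    exact h.trans h2
  set c11 := (Finset.univ.filter fun i => b i = 1 ∧ b' i = 1).card
  set c10 := (Finset.univ.filter fun i => b i = 1 ∧ b' i = 0).card
  set c01 := (Finset.univ.filter fun i => b i = 0 ∧ b' i = 1).card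
  set c00 := (Finset.univ.filter fun i => b i = 0 ∧ b' i = 0).card
  set d11 := (Finset.univ.filter fun i => b' i = 1 ∧ b i = 1).card
  set d10 := (Finset.univ.filter fun i => b' i = 1 ∧ b i = 0).card
  omega

lemma card_fiber {N k l m : ℕ} (hm : m ≤ l) (b : Fin N → Fin 2)
    (hb : (Finset.univ.filter fun i => b i = 1).card = k) :
    ((Finset.univ.filter fun b' : Fin N → Fin 2 =>
        (Finset.univ.filter fun i => b' i = 1).card = l).filter
      fun b' => (Finset.univ.filter fun i => b i = 1 ∧ b' i = 1).card = m).card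
    = k.choose m * (N - k).choose (l - m) := by
  classical
  set A := Finset.univ.filter (fun i => b i = 1) with hA
  have hinter : ∀ b' : Fin N → Fin 2,
      Finset.univ.filter (fun i => b i = 1 ∧ b' i = 1) =
        A ∩ Finset.univ.filter (fun i => b' i = 1) := by
    intro b'; ext i; simp [hA]
  have hcard : (A.powersetCard m ×ˢ Aᶜ.powersetCard (l - m)).card
      = k.choose m * (N - k).choose (l - m) := by
    rw [Finset.card_product, Finset.card_powersetCard, Finset.card_powersetCard, hb,
      Finset.card_compl, Fintype.card_fin, hb]
  rw [← hcard]
  apply Finset.card_nbij'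
    (i := fun b' => (A ∩ Finset.univ.filter (fun i => b' i = 1),
        (Finset.univ.filter (fun i => b' i = 1)) \ A))
    (j := fun PQ => indF (PQ.1 ∪ PQ.2))
  · intro b' hb'
    simp only [Finset.mem_coe, Finset.mem_filter] at hb'
    obtain ⟨⟨-, hl⟩, hmm⟩ := hb'
    rw [hinter] at hmm
    set B := Finset.univ.filter (fun i => b' i = 1) with hB
    have h1 : (B ∩ A).card + (B \ A).card = B.card := Finset.card_inter_add_card_sdiff B A
    have hBA : B ∩ A = A ∩ B := Finset.inter_comm _ _
    rw [Finset.mem_coe, Finset.mem_product, Finset.mem_powersetCard, Finset.mem_powersetCard]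
    refine ⟨⟨Finset.inter_subset_left, hmm⟩, fun i hi => ?_, ?_⟩
    · rw [Finset.mem_compl]; exact (Finset.mem_sdiff.mp hi).2
    · show (B \ A).card = l - m
      rw [hBA, hmm, hl] at h1; omega
  · rintro ⟨P, Q⟩ hPQ
    rw [Finset.mem_coe, Finset.mem_product, Finset.mem_powersetCard, Finset.mem_powersetCard] at hPQ
    obtain ⟨⟨hPA, hPm⟩, hQA, hQm⟩ := hPQ
    have hdisj : Disjoint P Q := by
      rw [Finset.disjoint_left]
      intro i hiP hiQ
      exact (Finset.mem_compl.mp (hQA hiQ)) (hPA hiP)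
    have hAPQ : A ∩ (P ∪ Q) = P := by
      ext i
      simp only [Finset.mem_inter, Finset.mem_union]
      constructor
      · rintro ⟨hiA, hiP | hiQ⟩
        · exact hiP
        · exact absurd hiA (Finset.mem_compl.mp (hQA hiQ))
      · intro hiP; exact ⟨hPA hiP, Or.inl hiP⟩
    simp only [Finset.mem_coe, Finset.mem_filter, filter_indF]
    refine ⟨⟨Finset.mem_univ _, ?_⟩, ?_⟩
    · rw [Finset.card_union_of_disjoint hdisj, hPm, hQm]; omega
    · rw [hinter, filter_indF, hAPQ, hPm]
  · intro b' hb'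
    have hBeq : A ∩ Finset.univ.filter (fun i => b' i = 1) ∪
        (Finset.univ.filter (fun i => b' i = 1)) \ A
        = Finset.univ.filter (fun i => b' i = 1) := by
      ext i
      simp only [Finset.mem_union, Finset.mem_inter, Finset.mem_sdiff]
      tauto
    simp only [hBeq, indF_filter]
  · rintro ⟨P, Q⟩ hPQ
    rw [Finset.mem_coe, Finset.mem_product, Finset.mem_powersetCard, Finset.mem_powersetCard] at hPQ
    obtain ⟨⟨hPA, hPm⟩, hQA, hQm⟩ := hPQ
    have hAPQ : A ∩ (P ∪ Q) = P := by
      ext i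
      simp only [Finset.mem_inter, Finset.mem_union]
      constructor
      · rintro ⟨hiA, hiP | hiQ⟩
        · exact hiP
        · exact absurd hiA (Finset.mem_compl.mp (hQA hiQ))
      · intro hiP; exact ⟨hPA hiP, Or.inl hiP⟩
    have hPQA : (P ∪ Q) \ A = Q := by
      ext i
      simp only [Finset.mem_sdiff, Finset.mem_union]
      constructor
      · rintro ⟨hiP | hiQ, hiA⟩
        · exact absurd (hPA hiP) hiA
        · exact hiQ
      · intro hiQ; exact ⟨Or.inr hiQ, Finset.mem_compl.mp (hQA hiQ)⟩
    simp only [filter_indF, hAPQ, hPQA]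

lemma scalar_eq {N k l : ℕ} (hk : k ≤ N) (hl : l ≤ N) :
    (Real.sqrt (N.choose k))⁻¹ * (Real.sqrt (N.choose l))⁻¹ * (N.choose k : ℝ)
      = Real.sqrt ((N.choose k : ℝ) / (N.choose l : ℝ)) := by
  have ha : 0 < (N.choose k : ℝ) := by exact_mod_cast Nat.choose_pos hk
  have hc : 0 < (N.choose l : ℝ) := by exact_mod_cast Nat.choose_pos hl
  have hsa : 0 < Real.sqrt (N.choose k) := Real.sqrt_pos.mpr ha
  have hsc : 0 < Real.sqrt (N.choose l) := Real.sqrt_pos.mpr hc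
  rw [Real.sqrt_div ha.le]
  rw [eq_div_iff hsc.ne']
  field_simp
  nlinarith [Real.mul_self_sqrt ha.le, Real.mul_self_sqrt hc.le]
/-- Matrix elements of a tensor power between Dicke states. -/
theorem dicke_matElem_tensPow (N k l : ℕ) (hN : 1 ≤ N) (hlk : l ≤ k) (hkN : k ≤ N)
    (hklN : k + l ≤ N) (G : Matrix (Fin 2) (Fin 2) ℂ) :
    matElem N k l (tensPow N G) =
      (Real.sqrt ((N.choose k : ℝ) / (N.choose l : ℝ)) : ℝ) *
        ∑ m ∈ Finset.range (l + 1),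
          (k.choose m : ℂ) * ((N - k).choose (l - m) : ℂ) *
            G 1 1 ^ m * G 1 0 ^ (k - m) * G 0 1 ^ (l - m) * G 0 0 ^ (N - k - l + m) := by
  classical
  set F_k := Finset.univ.filter (fun b : Fin N → Fin 2 =>
      (Finset.univ.filter fun i => b i = 1).card = k) with hFk
  set F_l := Finset.univ.filter (fun b' : Fin N → Fin 2 =>
      (Finset.univ.filter fun i => b' i = 1).card = l) with hFl
  have hlN : l ≤ N := le_trans hlk hkN
  -- Step 1: strip the Dicke normalizations
  have step1 : matElem N k l (tensPow N G) =
      ∑ b ∈ F_k, ∑ b' ∈ F_l,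
        ((((Real.sqrt (N.choose k))⁻¹ : ℝ) : ℂ) * (((Real.sqrt (N.choose l))⁻¹ : ℝ) : ℂ)) *
          ∏ i, G (b i) (b' i) := by
    have hmemk : ∀ b : Fin N → Fin 2,
        b ∈ F_k ↔ (Finset.univ.filter fun i => b i = 1).card = k := by
      intro b; rw [hFk, Finset.mem_filter]; simp
    have hmeml : ∀ b' : Fin N → Fin 2,
        b' ∈ F_l ↔ (Finset.univ.filter fun i => b' i = 1).card = l := by
      intro b'; rw [hFl, Finset.mem_filter]; simp
    unfold matElem tensPow kron dicke
    calc (∑ b : Fin N → Fin 2, ∑ b' : Fin N → Fin 2,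
          (starRingEnd ℂ) (if (Finset.univ.filter fun i => b i = 1).card = k then
              (((Real.sqrt (N.choose k))⁻¹ : ℝ) : ℂ) else 0) *
            Matrix.of (fun b b' => ∏ i, (fun _ => G) i (b i) (b' i)) b b' *
            (if (Finset.univ.filter fun i => b' i = 1).card = l then
              (((Real.sqrt (N.choose l))⁻¹ : ℝ) : ℂ) else 0))
        = ∑ b : Fin N → Fin 2, (if b ∈ F_k then (∑ b' : Fin N → Fin 2,
            (if b' ∈ F_l then
              ((((Real.sqrt (N.choose k))⁻¹ : ℝ) : ℂ) * (((Real.sqrt (N.choose l))⁻¹ : ℝ) : ℂ)) *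
                ∏ i, G (b i) (b' i) else 0)) else 0) := by
          refine Finset.sum_congr rfl fun b _ => ?_
          by_cases hb : b ∈ F_k
          · rw [if_pos hb, if_pos ((hmemk b).mp hb)]
            refine Finset.sum_congr rfl fun b' _ => ?_
            by_cases hb' : b' ∈ F_l
            · rw [if_pos hb', if_pos ((hmeml b').mp hb')]
              simp only [Matrix.of_apply, Complex.conj_ofReal]
              ring
            · rw [if_neg hb', if_neg fun h => hb' ((hmeml b').mpr h), mul_zero]
          · rw [if_neg hb, if_neg fun h => hb ((hmemk b).mpr h)]
            refine Finset.sum_eq_zero fun b' _ => ?_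
            simp
      _ = ∑ b ∈ F_k, ∑ b' ∈ F_l,
            ((((Real.sqrt (N.choose k))⁻¹ : ℝ) : ℂ) * (((Real.sqrt (N.choose l))⁻¹ : ℝ) : ℂ)) *
              ∏ i, G (b i) (b' i) := by
          rw [Finset.sum_ite_mem, Finset.univ_inter]
          exact Finset.sum_congr rfl fun b _ => by
            rw [Finset.sum_ite_mem, Finset.univ_inter]
  -- Step 2: evaluate the inner sum over b'
  have inner : ∀ b : Fin N → Fin 2, (Finset.univ.filter fun i => b i = 1).card = k →
      (∑ b' ∈ F_l, ∏ i, G (b i) (b' i)) =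
        ∑ m ∈ Finset.range (l + 1),
          ((k.choose m * (N - k).choose (l - m) : ℕ) : ℂ) *
            (G 1 1 ^ m * G 1 0 ^ (k - m) * G 0 1 ^ (l - m) * G 0 0 ^ (N - k - l + m)) := by
    intro b hb
    have hmaps : ∀ b' ∈ F_l,
        (Finset.univ.filter fun i => b i = 1 ∧ b' i = 1).card ∈ Finset.range (l + 1) := by
      intro b' hb'
      rw [hFl, Finset.mem_filter] at hb'
      rw [Finset.mem_range, Nat.lt_succ_iff, ← hb'.2]
      refine Finset.card_le_card fun i hi => ?_
      simp only [Finset.mem_filter] at hi ⊢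
      exact ⟨hi.1, hi.2.2⟩
    rw [← Finset.sum_fiberwise_of_maps_to hmaps]
    refine Finset.sum_congr rfl fun m hm => ?_
    have hml : m ≤ l := by rw [Finset.mem_range] at hm; omega
    have hterm : ∀ b' ∈ F_l.filter
        (fun b' => (Finset.univ.filter fun i => b i = 1 ∧ b' i = 1).card = m),
        ∏ i, G (b i) (b' i) =
          G 1 1 ^ m * G 1 0 ^ (k - m) * G 0 1 ^ (l - m) * G 0 0 ^ (N - k - l + m) := by
      intro b' hb'
      rw [Finset.mem_filter, hFl, Finset.mem_filter] at hb'
      obtain ⟨⟨-, hl'⟩, hm'⟩ := hb'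
      obtain ⟨h10, h01, h00⟩ := four_cards hklN b b' hb hl' hm'
      rw [prod_G, hm', h10, h01, h00]
    rw [Finset.sum_congr rfl hterm, Finset.sum_const, hFl, card_fiber hml b hb,
      nsmul_eq_mul]
  have step2 : ∀ b ∈ F_k,
      (∑ b' ∈ F_l,
        ((((Real.sqrt (N.choose k))⁻¹ : ℝ) : ℂ) * (((Real.sqrt (N.choose l))⁻¹ : ℝ) : ℂ)) *
          ∏ i, G (b i) (b' i)) =
      ((((Real.sqrt (N.choose k))⁻¹ : ℝ) : ℂ) * (((Real.sqrt (N.choose l))⁻¹ : ℝ) : ℂ)) *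
        ∑ m ∈ Finset.range (l + 1),
          ((k.choose m * (N - k).choose (l - m) : ℕ) : ℂ) *
            (G 1 1 ^ m * G 1 0 ^ (k - m) * G 0 1 ^ (l - m) * G 0 0 ^ (N - k - l + m)) := by
    intro b hb
    rw [hFk, Finset.mem_filter] at hb
    rw [← Finset.mul_sum, inner b hb.2]
  rw [step1, Finset.sum_congr rfl step2, Finset.sum_const, hFk, card_wt, nsmul_eq_mul]
  have hs : ((Real.sqrt ((N.choose k : ℝ) / (N.choose l : ℝ)) : ℝ) : ℂ) =
      (((Real.sqrt (N.choose k))⁻¹ : ℝ) : ℂ) * (((Real.sqrt (N.choose l))⁻¹ : ℝ) : ℂ) *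
        ((N.choose k : ℕ) : ℂ) := by
    rw [← scalar_eq hkN hlN]
    push_cast
    ring
  rw [hs, Finset.mul_sum, Finset.mul_sum, Finset.mul_sum]
  refine Finset.sum_congr rfl fun m _ => ?_
  push_cast
  ring
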